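/- Consider the linear program with variables x ∈ ℝ^n and constraints: (i) ∑_{j=1}^n h̃_j x_j = c where h̃_j ∈ ℚ^m, (ii) ∑_{j ∈ I_k} x_j = d_k for each k in a finite index set K, where the sets I_k partition a subset of [n], and (iii) l ≤ x ≤ u. Let x̄ be a vertex solution and let η = |{j : x̄_j ∉ ℤ}| be the size of its non-integral support. If the submatrix of the constraint matrix restricted to the non-integral support columns is non-singular (has linearly independent columns) and all d_k ∈ ℤ, then η ≤ 2m. -/

import Mathlib

/-- For a vertex solution of the LP with `m` coupling constraints, disjoint group
constraints with integral right-hand sides, and box constraints, the non-integral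
support has size at most `2m`. -/
theorem stmt_4 {m n : ℕ} {K : Type*} [Fintype K] [DecidableEq K]
    (htil : Fin n → Fin m → ℚ) (c : Fin m → ℚ)
    (I : K → Finset (Fin n)) (hdisj : ∀ k k', k ≠ k' → Disjoint (I k) (I k'))
    (d : K → ℤ) (l u : Fin n → ℚ) (xbar : Fin n → ℚ)
    (hc1 : ∀ i : Fin m, ∑ j : Fin n, xbar j • htil j i = c i)
    (hc2 : ∀ k : K, ∑ j ∈ I k, xbar j = (d k : ℚ))
    (hbox : ∀ j, l j ≤ xbar j ∧ xbar j ≤ u j)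
    (S : Finset (Fin n)) (hSdef : S = Finset.univ.filter (fun j => (xbar j).den ≠ 1))
    (hind : LinearIndependent ℚ
      (fun j : {j : Fin n // j ∈ S} =>
        (Sum.elim (fun i : Fin m => htil j.val i)
          (fun k : K => if j.val ∈ I k then (1 : ℚ) else 0) : Fin m ⊕ K → ℚ))) :
    S.card ≤ 2 * m := by
  classical
  -- the set of groups touched by the non-integral support
  set K' : Finset K := Finset.univ.filter (fun k => (I k ∩ S).Nonempty) with hK'
  -- membership criterion for S
  have hS_mem : ∀ j, j ∈ S ↔ (xbar j).den ≠ 1 := by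
    intro j; rw [hSdef]; simp
  -- each touched group has at least 2 non-integral variables
  have h2 : ∀ k ∈ K', 2 ≤ (I k ∩ S).card := by
    intro k hk
    rw [hK', Finset.mem_filter] at hk
    obtain ⟨j0, hj0⟩ := hk.2
    rw [Finset.mem_inter] at hj0
    by_contra hlt
    push_neg at hlt
    -- then I k ∩ S = {j0}
    have hsingle : ∀ j ∈ I k, j ≠ j0 → (xbar j).den = 1 := by
      intro j hj hne
      by_contra hden
      have hjS : j ∈ I k ∩ S := Finset.mem_inter.mpr ⟨hj, (hS_mem j).mpr hden⟩
      have : ({j0, j} : Finset (Fin n)) ⊆ I k ∩ S := by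
        intro x hx
        rcases Finset.mem_insert.mp hx with h | h
        · exact h ▸ Finset.mem_inter.mpr ⟨hj0.1, hj0.2⟩
        · exact (Finset.mem_singleton.mp h) ▸ hjS
      have hcard : ({j0, j} : Finset (Fin n)).card = 2 := by
        rw [Finset.card_insert_of_notMem (by simp [hne.symm] ), Finset.card_singleton]
      have := Finset.card_le_card this
      omega
    -- so xbar j0 is an integer, contradiction
    have hsum := hc2 k
    rw [← Finset.add_sum_erase _ _ hj0.1] at hsum
    have hrest : ∃ z : ℤ, ∑ j ∈ (I k).erase j0, xbar j = (z : ℚ) := by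
      refine Finset.sum_induction _ (fun q => ∃ z : ℤ, q = (z : ℚ)) ?_ ⟨0, by simp⟩ ?_
      · rintro a b ⟨za, rfl⟩ ⟨zb, rfl⟩; exact ⟨za + zb, by push_cast; ring⟩
      · intro j hj
        have hj' := Finset.mem_erase.mp hj
        have := hsingle j hj'.2 hj'.1
        exact ⟨(xbar j).num, ((Rat.den_eq_one_iff _).mp this).symm⟩
    obtain ⟨z, hz⟩ := hrest
    have : xbar j0 = ((d k - z : ℤ) : ℚ) := by push_cast; linarith [hsum, hz]
    have : (xbar j0).den = 1 := by rw [this]; exact Rat.den_intCast _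
    exact (hS_mem j0).mp hj0.2 this
  -- counting: 2 * K'.card ≤ S.card
  have hcount : 2 * K'.card ≤ S.card := by
    have hdisj' : ∀ k ∈ K', ∀ k' ∈ K', k ≠ k' → Disjoint (I k ∩ S) (I k' ∩ S) := by
      intro k _ k' _ hne
      exact (hdisj k k' hne).mono (Finset.inter_subset_left) (Finset.inter_subset_left)
    have hsub : K'.biUnion (fun k => I k ∩ S) ⊆ S := by
      intro x hx
      obtain ⟨k, _, hk⟩ := Finset.mem_biUnion.mp hx
      exact (Finset.mem_inter.mp hk).2
    calc 2 * K'.card = ∑ _k ∈ K', 2 := by rw [Finset.sum_const]; ring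
      _ ≤ ∑ k ∈ K', (I k ∩ S).card := Finset.sum_le_sum h2
      _ = (K'.biUnion (fun k => I k ∩ S)).card := (Finset.card_biUnion hdisj').symm
      _ ≤ S.card := Finset.card_le_card hsub
  -- linear independence of restricted columns
  let w : {j : Fin n // j ∈ S} → (Fin m ⊕ {k : K // k ∈ K'} → ℚ) := fun j =>
    Sum.elim (fun i => htil j.val i) (fun k => if j.val ∈ I k.val then (1 : ℚ) else 0)
  have hw : LinearIndependent ℚ w := by
    rw [Fintype.linearIndependent_iff]
    intro g hg
    refine (Fintype.linearIndependent_iff.mp hind) g ?_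
    funext x
    have hgx := congrFun hg
    cases x with
    | inl i =>
      have := hgx (Sum.inl i)
      simpa [w, Finset.sum_apply] using this
    | inr k =>
      by_cases hk : k ∈ K'
      · have := hgx (Sum.inr ⟨k, hk⟩)
        simpa [w, Finset.sum_apply] using this
      · have hzero : ∀ j : {j : Fin n // j ∈ S}, j.val ∉ I k := by
          intro j hj
          refine hk ?_
          rw [hK', Finset.mem_filter]
          exact ⟨Finset.mem_univ _, ⟨j.val, Finset.mem_inter.mpr ⟨hj, j.2⟩⟩⟩
        rw [Finset.sum_apply]
        rw [show (0 : Fin m ⊕ K → ℚ) (Sum.inr k) = 0 from rfl]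
        refine Finset.sum_eq_zero fun j _ => ?_
        simp [hzero j]
  -- dimension bound: S.card ≤ m + K'.card
  have hdim : S.card ≤ m + K'.card := by
    have := hw.fintype_card_le_finrank
    rw [Module.finrank_pi, Fintype.card_sum, Fintype.card_fin, Fintype.card_coe,
      Fintype.card_coe] at this
    exact this
  omega
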